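/- Let G be the graph on the 21 vertices {x_i, y_i, z_i : i ∈ ℤ/7ℤ} with edges {x_i, x_{i+1}}, {x_i, y_i}, {y_i, z_i}, {z_i, y_{i+1}}, {z_i, z_{i+3}} (indices modulo 7). Define ν : V → ℝ by ν(x_i) = ν(z_i) = 3/7 and ν(y_i) = 5/14 for all i. Then ν ∈ HSTAB(G). -/

import Mathlib

variable {V : Type*}

/-- A stable (independent) set of a graph. -/
def IsStableSet (G : SimpleGraph V) (S : Set V) : Prop :=
  ∀ u ∈ S, ∀ v ∈ S, ¬ G.Adj u v

/-- The vertex set of a cycle subgraph of `G`, given by an injective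
parametrization `c : ZMod m → V` (`m ≥ 3`) with consecutive vertices adjacent. -/
def IsCycleSet (G : SimpleGraph V) (C : Set V) : Prop :=
  ∃ (m : ℕ) (c : ZMod m → V), 3 ≤ m ∧ Function.Injective c ∧
    (∀ i, G.Adj (c i) (c (i + 1))) ∧ C = Set.range c

/-- The vertex set of an odd cycle subgraph of `G`. -/
def IsOddCycleSet (G : SimpleGraph V) (C : Set V) : Prop :=
  ∃ (m : ℕ) (c : ZMod m → V), 3 ≤ m ∧ Odd m ∧ Function.Injective c ∧
    (∀ i, G.Adj (c i) (c (i + 1))) ∧ C = Set.range c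

/-- The vertex set of a chordless odd cycle subgraph of `G`: the only edges of `G`
between vertices of the cycle are the cycle edges. -/
def IsChordlessOddCycleSet (G : SimpleGraph V) (C : Set V) : Prop :=
  ∃ (m : ℕ) (c : ZMod m → V), 3 ≤ m ∧ Odd m ∧ Function.Injective c ∧
    (∀ i, G.Adj (c i) (c (i + 1))) ∧
    (∀ i j, G.Adj (c i) (c j) → j = i + 1 ∨ i = j + 1) ∧
    C = Set.range c

/-- A maximal clique of `G`. -/
def IsMaximalClique (G : SimpleGraph V) (K : Set V) : Prop :=
  G.IsClique K ∧ ∀ K' : Set V, G.IsClique K' → K ⊆ K' → K = K'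

/-- Membership in HSTAB(G). -/
def memHSTAB (G : SimpleGraph V) (f : V → ℝ) : Prop :=
  (∀ x, 0 ≤ f x) ∧
  (∀ K : Set V, G.IsClique K → (∑ᶠ v ∈ K, f v) ≤ 1) ∧
  (∀ C : Set V, IsOddCycleSet G C → (∑ᶠ v ∈ C, f v) ≤ ((C.ncard : ℝ) - 1) / 2)

/-- Membership in TSTAB(G). -/
def memTSTAB (G : SimpleGraph V) (f : V → ℝ) : Prop :=
  (∀ x, 0 ≤ f x ∧ f x ≤ 1) ∧
  (∀ x y, G.Adj x y → f x + f y ≤ 1) ∧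
  (∀ C : Set V, IsOddCycleSet G C → (∑ᶠ v ∈ C, f v) ≤ ((C.ncard : ℝ) - 1) / 2)

/-- Membership in QSTAB(G). -/
def memQSTAB (G : SimpleGraph V) (f : V → ℝ) : Prop :=
  (∀ x, 0 ≤ f x) ∧
  (∀ K : Set V, G.IsClique K → (∑ᶠ v ∈ K, f v) ≤ 1)

/-- The stable set polytope STAB(G). -/
def STAB (G : SimpleGraph V) : Set (V → ℝ) :=
  convexHull ℝ {f : V → ℝ | ∃ S : Set V, IsStableSet G S ∧ f = S.indicator 1}

/-- The set `U^(n)` of the paper, as a predicate on pairs `(g, d)`. -/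
def memU (G : SimpleGraph V) (n : ℤ) (g : V → ℤ) (d : ℤ) : Prop :=
  (∀ v, n ≤ g v) ∧
  (∀ K : Set V, IsMaximalClique G K → (∑ᶠ v ∈ K, g v) ≤ d - n) ∧
  (∀ C : Set V, IsChordlessOddCycleSet G C → 5 ≤ C.ncard →
    2 * (∑ᶠ v ∈ C, g v) ≤ d * ((C.ncard : ℤ) - 1) - 2 * n)
/-- The 21 vertices `x_i, y_i, z_i`, `i ∈ ℤ/7ℤ`. -/
inductive Vtx : Type
  | x : ZMod 7 → Vtx
  | y : ZMod 7 → Vtx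
  | z : ZMod 7 → Vtx
  deriving DecidableEq, Fintype

/-- The oriented edge relation of the example graph. -/
def paperRel : Vtx → Vtx → Prop := fun u v =>
  (∃ i, u = Vtx.x i ∧ v = Vtx.x (i + 1)) ∨
  (∃ i, u = Vtx.x i ∧ v = Vtx.y i) ∨
  (∃ i, u = Vtx.y i ∧ v = Vtx.z i) ∨
  (∃ i, u = Vtx.z i ∧ v = Vtx.y (i + 1)) ∨
  (∃ i, u = Vtx.z i ∧ v = Vtx.z (i + 3))

instance : DecidableRel paperRel := fun u v => by
  unfold paperRel; infer_instance

/-- The example graph of the paper. -/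
def paperGraph : SimpleGraph Vtx where
  Adj u v := paperRel u v ∨ paperRel v u
  symm := ⟨fun _ _ h => Or.symm h⟩
  loopless := ⟨by
    show ∀ a, ¬(paperRel a a ∨ paperRel a a)
    decide⟩

/-- The function `ν` with `ν(x_i) = ν(z_i) = 3/7`, `ν(y_i) = 5/14`. -/
noncomputable def nuPaper : Vtx → ℝ
  | Vtx.x _ => 3 / 7
  | Vtx.y _ => 5 / 14
  | Vtx.z _ => 3 / 7


instance : DecidableRel paperGraph.Adj := fun u v =>
  inferInstanceAs (Decidable (paperRel u v ∨ paperRel v u))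

/-- Indicator (in `ℕ`) of a vertex being of type `y`. -/
def yn : Vtx → ℕ
  | Vtx.y _ => 1
  | _ => 0

/-- Fast boolean adjacency test for `paperGraph`. -/
def adjB : Vtx → Vtx → Bool
  | Vtx.x i, Vtx.x j => j == i + 1 || i == j + 1
  | Vtx.x i, Vtx.y j => i == j
  | Vtx.y i, Vtx.x j => i == j
  | Vtx.y i, Vtx.z j => i == j || i == j + 1
  | Vtx.z i, Vtx.y j => j == i || j == i + 1
  | Vtx.z i, Vtx.z j => j == i + 3 || i == j + 3
  | _, _ => false

set_option maxRecDepth 10000 in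
lemma adjB_iff : ∀ u v, paperGraph.Adj u v ↔ adjB u v = true := by decide

set_option maxRecDepth 10000 in
/-- The graph is triangle-free. -/
lemma key3 : ∀ a b c : Vtx, adjB a b = true → adjB b c = true →
    adjB c a = true → False := by decide

/-- The list of all 21 vertices. -/
def vtxList : List Vtx :=
  ((List.range 7).map fun n => Vtx.x (n : ZMod 7)) ++
  ((List.range 7).map fun n => Vtx.y (n : ZMod 7)) ++
  ((List.range 7).map fun n => Vtx.z (n : ZMod 7))

set_option maxRecDepth 10000 in
lemma mem_vtxList : ∀ v : Vtx, v ∈ vtxList := by decide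

/-- Boolean check that every closed 5-walk contains at least two `y`-vertices. -/
def check5 : Bool :=
  vtxList.all fun v0 => vtxList.all fun v1 => !adjB v0 v1 ||
    vtxList.all fun v2 => !adjB v1 v2 ||
      vtxList.all fun v3 => !adjB v2 v3 ||
        vtxList.all fun v4 => !adjB v3 v4 || !adjB v4 v0 ||
          decide (2 ≤ yn v0 + yn v1 + yn v2 + yn v3 + yn v4)

set_option maxRecDepth 100000 in
lemma check5_true : check5 = true := by decide

/-- Every closed 5-walk contains at least two `y`-vertices. -/
lemma key5 (v0 v1 v2 v3 v4 : Vtx) (h01 : adjB v0 v1 = true) (h12 : adjB v1 v2 = true)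
    (h23 : adjB v2 v3 = true) (h34 : adjB v3 v4 = true) (h40 : adjB v4 v0 = true) :
    2 ≤ yn v0 + yn v1 + yn v2 + yn v3 + yn v4 := by
  have h := check5_true
  simp only [check5, List.all_eq_true, Bool.or_eq_true, Bool.not_eq_true',
    decide_eq_true_eq] at h
  rcases h v0 (mem_vtxList v0) v1 (mem_vtxList v1) with h' | h'
  · rw [h01] at h'; exact absurd h' (by simp)
  rcases h' v2 (mem_vtxList v2) with h' | h'
  · rw [h12] at h'; exact absurd h' (by simp)
  rcases h' v3 (mem_vtxList v3) with h' | h'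
  · rw [h23] at h'; exact absurd h' (by simp)
  rcases h' v4 (mem_vtxList v4) with (h' | h') | h'
  · rw [h34] at h'; exact absurd h' (by simp)
  · rw [h40] at h'; exact absurd h' (by simp)
  · exact h'

lemma nu_eq (v : Vtx) : nuPaper v = 3 / 7 - (yn v : ℝ) / 14 := by
  cases v <;> simp [nuPaper, yn] <;> norm_num

lemma nu_nonneg (v : Vtx) : 0 ≤ nuPaper v := by
  cases v <;> norm_num [nuPaper]

lemma nu_le (v : Vtx) : nuPaper v ≤ 3 / 7 := by
  cases v <;> norm_num [nuPaper]

/-- `ν ∈ HSTAB(G)` for the example graph. -/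
theorem stmt15 : memHSTAB paperGraph nuPaper := by
  refine ⟨nu_nonneg, ?_, ?_⟩
  · -- clique inequalities
    intro K hK
    rcases Set.subsingleton_or_nontrivial K with hs | hn
    · rcases hs.eq_empty_or_singleton with rfl | ⟨a, rfl⟩
      · simp
      · rw [finsum_mem_singleton]
        have := nu_le a; linarith
    · obtain ⟨u, hu, v, hv, huv⟩ := hn
      have hKeq : K = {u, v} := by
        apply Set.Subset.antisymm
        · intro w hw
          by_contra hcon
          simp only [Set.mem_insert_iff, Set.mem_singleton_iff, not_or] at hcon
          exact key3 u v w ((adjB_iff _ _).1 (hK hu hv huv))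
            ((adjB_iff _ _).1 (hK hv hw (Ne.symm hcon.2)))
            ((adjB_iff _ _).1 (hK hw hu hcon.1))
        · rintro w (rfl | rfl) <;> assumption
      rw [hKeq, finsum_mem_pair huv]
      have := nu_le u; have := nu_le v; linarith
  · -- odd cycle inequalities
    intro C hC
    obtain ⟨m, c, hm3, hmodd, hinj, hadj, rfl⟩ := hC
    haveI : NeZero m := ⟨by omega⟩
    have hcard : (Set.range c).ncard = m := by
      rw [← Nat.card_coe_set_eq, Nat.card_range_of_injective hinj,
        Nat.card_eq_fintype_card, ZMod.card]
    have hsum : (∑ᶠ v ∈ Set.range c, nuPaper v) = ∑ i : ZMod m, nuPaper (c i) := by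
      rw [finsum_mem_range hinj, finsum_eq_sum_of_fintype]
    have hsum2 : (∑ i : ZMod m, nuPaper (c i))
        = m * (3 / 7) - ((∑ i : ZMod m, yn (c i) : ℕ) : ℝ) / 14 := by
      simp only [nu_eq]
      rw [Finset.sum_sub_distrib, Finset.sum_const, Finset.card_univ, ZMod.card,
        ← Finset.sum_div, nsmul_eq_mul]
      push_cast
      ring
    have hkey : 7 ≤ m + ∑ i : ZMod m, yn (c i) := by
      rcases le_or_gt 7 m with h | h
      · omega
      · have hm35 : m = 3 ∨ m = 5 := by
          obtain ⟨k, hk⟩ := hmodd; omega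
        rcases hm35 with rfl | rfl
        · exfalso
          have h01 := hadj 0
          have h12 := hadj 1
          have h20 := hadj 2
          rw [show ((0 : ZMod 3) + 1) = 1 from by decide] at h01
          rw [show ((1 : ZMod 3) + 1) = 2 from by decide] at h12
          rw [show ((2 : ZMod 3) + 1) = 0 from by decide] at h20
          exact key3 _ _ _ ((adjB_iff _ _).1 h01) ((adjB_iff _ _).1 h12)
            ((adjB_iff _ _).1 h20)
        · have h01 := hadj 0
          have h12 := hadj 1
          have h23 := hadj 2
          have h34 := hadj 3
          have h40 := hadj 4
          rw [show ((0 : ZMod 5) + 1) = 1 from by decide] at h01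
          rw [show ((1 : ZMod 5) + 1) = 2 from by decide] at h12
          rw [show ((2 : ZMod 5) + 1) = 3 from by decide] at h23
          rw [show ((3 : ZMod 5) + 1) = 4 from by decide] at h34
          rw [show ((4 : ZMod 5) + 1) = 0 from by decide] at h40
          have h5 := key5 (c 0) (c 1) (c 2) (c 3) (c 4)
            ((adjB_iff _ _).1 h01) ((adjB_iff _ _).1 h12) ((adjB_iff _ _).1 h23)
            ((adjB_iff _ _).1 h34) ((adjB_iff _ _).1 h40)
          have hKeq : (∑ i : ZMod 5, yn (c i))
              = yn (c 0) + yn (c 1) + yn (c 2) + yn (c 3) + yn (c 4) := by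
            have := Fin.sum_univ_five (fun i : Fin 5 => yn (c i))
            exact this
          omega
    rw [hcard, hsum, hsum2]
    have hm3' : (3 : ℝ) ≤ m := by exact_mod_cast hm3
    have hk : (7 : ℝ) ≤ (m : ℝ) + ((∑ i : ZMod m, yn (c i) : ℕ) : ℝ) := by
      exact_mod_cast hkey
    have hKnn : (0 : ℝ) ≤ ((∑ i : ZMod m, yn (c i) : ℕ) : ℝ) := Nat.cast_nonneg _
    linarith
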